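/- Let M₁,...,M_K be symmetric positive definite 2×2 matrices and consider the K-block matrix J(s) = BlockDiag[M_k] + s·L, where L is the block Laplacian of the complete graph with unit edge weights (i.e., [L]_{k,k} = (K−1)I₂, [L]_{k,j} = −I₂ for j ≠ k). Then as s → ∞, the equivalent information of block K, ([J(s)⁻¹]_{K,K})⁻¹, converges to ∑_{k=1}^K M_k. -/

import Mathlib

open Matrix Filter

namespace Stmt16

variable {n : Type*} [Fintype n] [DecidableEq n] {K : ℕ}

lemma tendsto_minv {α : Type*} {l : Filter α} {f : α → Matrix n n ℝ} {A : Matrix n n ℝ}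
    (h : Tendsto f l (nhds A)) (hA : IsUnit A.det) :
    Tendsto (fun x => (f x)⁻¹) l (nhds A⁻¹) := by
  have hdet : Tendsto (fun x => (f x).det) l (nhds A.det) :=
    ((continuous_id.matrix_det).tendsto A).comp h
  have hadj : Tendsto (fun x => (f x).adjugate) l (nhds A.adjugate) :=
    ((continuous_id.matrix_adjugate).tendsto A).comp h
  have h2 := (hdet.inv₀ (by simpa [isUnit_iff_ne_zero] using hA)).smul hadj
  simpa only [Matrix.inv_def, Ring.inverse_eq_inv'] using h2

lemma msmul_inv (c : ℝ) (hc : c ≠ 0) (A : Matrix n n ℝ) : (c • A)⁻¹ = c⁻¹ • A⁻¹ := by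
  by_cases h : IsUnit A.det
  · apply Matrix.inv_eq_right_inv
    rw [Matrix.smul_mul, Matrix.mul_smul, smul_smul, mul_inv_cancel₀ hc, one_smul,
      Matrix.mul_nonsing_inv _ h]
  · rw [Matrix.nonsing_inv_apply_not_isUnit _ h, Matrix.nonsing_inv_apply_not_isUnit, smul_zero]
    simp only [isUnit_iff_ne_zero, not_not] at h
    simp [Matrix.det_smul, h]

lemma tendsto_smul_inv (M : Matrix n n ℝ) :
    Tendsto (fun a : ℝ => a • (M + a • (1 : Matrix n n ℝ))⁻¹) atTop (nhds 1) := by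
  have h0 : Tendsto (fun a : ℝ => a⁻¹ • M + (1 : Matrix n n ℝ)) atTop
      (nhds ((0:ℝ) • M + 1)) :=
    (tendsto_inv_atTop_zero.smul_const M).add tendsto_const_nhds
  rw [zero_smul, zero_add] at h0
  have h1 := tendsto_minv h0 (by simp)
  rw [inv_one] at h1
  refine h1.congr' ?_
  filter_upwards [eventually_gt_atTop 0] with a ha
  have hc : (a:ℝ)⁻¹ ≠ 0 := inv_ne_zero ha.ne'
  rw [show a⁻¹ • M + (1 : Matrix n n ℝ) = a⁻¹ • (M + a • 1) by
    rw [smul_add, smul_smul, inv_mul_cancel₀ ha.ne', one_smul]]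
  rw [msmul_inv _ hc, inv_inv]

lemma woodbury {m : Type*} [Fintype m] [DecidableEq m]
    (s : ℝ) (hs : s ≠ 0) (B Bi : Matrix n n ℝ) (W : Matrix n m ℝ) (C Ci : Matrix m m ℝ)
    (hB : B * Bi = 1) (hW : Wᵀ * Bi * W = s⁻¹ • (1 : Matrix m m ℝ) - C) (hC : C * Ci = 1) :
    (B - s • (W * Wᵀ)) * (Bi + (Bi * W) * (Ci * (Wᵀ * Bi))) = 1 := by
  have hW' : Wᵀ * (Bi * W) = s⁻¹ • (1 : Matrix m m ℝ) - C := by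
    rw [← Matrix.mul_assoc, hW]
  have e1 : B * ((Bi * W) * (Ci * (Wᵀ * Bi))) = W * (Ci * (Wᵀ * Bi)) := by
    rw [← Matrix.mul_assoc B (Bi * W) (Ci * (Wᵀ * Bi)), ← Matrix.mul_assoc B Bi W, hB,
      Matrix.one_mul]
  have e3 : (s⁻¹ • (1 : Matrix m m ℝ) - C) * (Ci * (Wᵀ * Bi))
      = s⁻¹ • (Ci * (Wᵀ * Bi)) - Wᵀ * Bi := by
    rw [Matrix.sub_mul, Matrix.smul_mul, Matrix.one_mul,
      ← Matrix.mul_assoc C Ci (Wᵀ * Bi), hC, Matrix.one_mul]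
  have e2 : (W * Wᵀ) * ((Bi * W) * (Ci * (Wᵀ * Bi)))
      = s⁻¹ • (W * (Ci * (Wᵀ * Bi))) - W * (Wᵀ * Bi) := by
    rw [Matrix.mul_assoc W Wᵀ ((Bi * W) * (Ci * (Wᵀ * Bi))),
      ← Matrix.mul_assoc Wᵀ (Bi * W) (Ci * (Wᵀ * Bi)), hW', e3,
      Matrix.mul_sub, Matrix.mul_smul]
  have e4 : (W * Wᵀ) * Bi = W * (Wᵀ * Bi) := Matrix.mul_assoc _ _ _
  rw [Matrix.sub_mul, Matrix.mul_add, Matrix.mul_add, Matrix.smul_mul, Matrix.smul_mul, hB,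
    e1, e2, e4, smul_sub, smul_smul, mul_inv_cancel₀ hs, one_smul]
  abel

def DD (f : Fin K → Matrix (Fin 2) (Fin 2) ℝ) : Matrix (Fin K × Fin 2) (Fin K × Fin 2) ℝ :=
  (blockDiagonal f).submatrix (Equiv.prodComm (Fin K) (Fin 2)) (Equiv.prodComm (Fin K) (Fin 2))

lemma DD_apply (f : Fin K → Matrix (Fin 2) (Fin 2) ℝ) (p q : Fin K × Fin 2) :
    DD f p q = if p.1 = q.1 then f p.1 p.2 q.2 else 0 := by
  rcases p with ⟨k, i⟩; rcases q with ⟨l, j⟩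
  simp [DD, blockDiagonal_apply, eq_comm]

lemma DD_mul (f g : Fin K → Matrix (Fin 2) (Fin 2) ℝ) :
    DD f * DD g = DD (fun k => f k * g k) := by
  rw [DD, DD, submatrix_mul_equiv, ← blockDiagonal_mul]; rfl

lemma DD_one : DD (fun _ : Fin K => (1 : Matrix (Fin 2) (Fin 2) ℝ)) = 1 := by
  rw [DD, show (fun _ : Fin K => (1 : Matrix (Fin 2) (Fin 2) ℝ))
    = (1 : Fin K → Matrix (Fin 2) (Fin 2) ℝ) from rfl, blockDiagonal_one, submatrix_one_equiv]

def WW (K : ℕ) : Matrix (Fin K × Fin 2) (Fin 2) ℝ :=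
  Matrix.of fun p j => if p.2 = j then 1 else 0

lemma DD_mul_WW (f : Fin K → Matrix (Fin 2) (Fin 2) ℝ) (p : Fin K × Fin 2) (j : Fin 2) :
    (DD f * WW K) p j = f p.1 p.2 j := by
  rcases p with ⟨k, i⟩
  simp [Matrix.mul_apply, DD_apply, WW, Fintype.sum_prod_type, ite_and]

lemma WWT_mul_DD (f : Fin K → Matrix (Fin 2) (Fin 2) ℝ) (i : Fin 2) (q : Fin K × Fin 2) :
    ((WW K)ᵀ * DD f) i q = f q.1 i q.2 := by
  rcases q with ⟨l, j⟩
  simp [Matrix.mul_apply, DD_apply, WW, Fintype.sum_prod_type, ite_and, transpose_apply]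

lemma sandwich (f : Fin K → Matrix (Fin 2) (Fin 2) ℝ) :
    (WW K)ᵀ * DD f * WW K = ∑ k, f k := by
  ext i j
  rw [Matrix.mul_apply]
  simp only [WWT_mul_DD]
  simp [WW, Fintype.sum_prod_type, Matrix.sum_apply]

lemma WW_mul_WWT (p q : Fin K × Fin 2) :
    (WW K * (WW K)ᵀ) p q = if p.2 = q.2 then 1 else 0 := by
  rcases p with ⟨k, i⟩; rcases q with ⟨l, j⟩
  simp [Matrix.mul_apply, WW, ite_and, eq_comm]

lemma posdef_shift {M : Matrix n n ℝ} (h : M.PosDef) {a : ℝ} (ha : 0 ≤ a) :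
    (M + a • (1 : Matrix n n ℝ)).PosDef := by
  refine h.add_posSemidef ?_
  rw [Matrix.smul_one_eq_diagonal]
  exact Matrix.PosSemidef.diagonal fun _ => ha

lemma posdef_sum (hK : 0 < K) (M : Fin K → Matrix (Fin 2) (Fin 2) ℝ)
    (hM : ∀ k, (M k).PosDef) : (∑ k, M k).PosDef := by
  have : Nonempty (Fin K) := ⟨⟨0, hK⟩⟩
  rw [Matrix.posDef_iff_dotProduct_mulVec]
  constructor
  · rw [Matrix.IsHermitian, Matrix.conjTranspose_sum]
    exact Finset.sum_congr rfl fun k _ => (hM k).1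
  · intro x hx
    have h1 : (∑ k, M k) *ᵥ x = ∑ k, M k *ᵥ x :=
      map_sum (Matrix.mulVec.addMonoidHomLeft x) M Finset.univ
    have h2 : star x ⬝ᵥ ∑ k, M k *ᵥ x = ∑ k, star x ⬝ᵥ (M k *ᵥ x) :=
      map_sum (AddMonoidHom.mk' (fun v => star x ⬝ᵥ v) fun a b => dotProduct_add _ _ _) _ _
    rw [h1, h2]
    exact Finset.sum_pos (fun k _ => (hM k).dotProduct_mulVec_pos hx) Finset.univ_nonempty

end Stmt16

open Stmt16 in
/-- Infinitely strong spatial correlation superimposes measurement information: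
for `J(s) = BlockDiag[M_k] + s·L`, with `L` the block Laplacian of the complete graph,
the equivalent information of the last block tends to `∑ₖ M_k` as `s → ∞`. -/
theorem stmt16 {K : ℕ} (hK : 0 < K) (M : Fin K → Matrix (Fin 2) (Fin 2) ℝ)
    (hM : ∀ k, (M k).PosDef) :
    Filter.Tendsto
      (fun s : ℝ =>
        (Matrix.of fun i j : Fin 2 =>
          ((Matrix.of fun p q : Fin K × Fin 2 =>
              (if p.1 = q.1 then M p.1 p.2 q.2 else 0) +
              s * (if p.1 = q.1 then ((K : ℝ) - 1) * (if p.2 = q.2 then 1 else 0)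
                   else -(if p.2 = q.2 then (1 : ℝ) else 0)))⁻¹)
            ((⟨K - 1, Nat.sub_lt hK Nat.one_pos⟩ : Fin K), i)
            ((⟨K - 1, Nat.sub_lt hK Nat.one_pos⟩ : Fin K), j))⁻¹)
      Filter.atTop (nhds (∑ k, M k)) := by
  classical
  have hKR : (0:ℝ) < (K:ℝ) := by exact_mod_cast hK
  set kK : Fin K := ⟨K - 1, Nat.sub_lt hK Nat.one_pos⟩ with hkK
  set A : ℝ → Fin K → Matrix (Fin 2) (Fin 2) ℝ :=
    fun s k => M k + (s * K) • 1 with hA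
  set T : ℝ → Matrix (Fin 2) (Fin 2) ℝ := fun s => ∑ k, (A s k)⁻¹ * M k with hT
  set P : ℝ → Matrix (Fin 2) (Fin 2) ℝ := fun s => (s * K) • (A s kK)⁻¹ with hPdef
  set Q : ℝ → Matrix (Fin 2) (Fin 2) ℝ := fun s => (s * K) • T s with hQdef
  have ha : Tendsto (fun s : ℝ => s * (K:ℝ)) atTop atTop :=
    Tendsto.atTop_mul_const hKR tendsto_id
  have hP : Tendsto P atTop (nhds 1) := (tendsto_smul_inv (M kK)).comp ha
  have hQ : Tendsto Q atTop (nhds (∑ k, M k)) := by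
    have each : ∀ k, Tendsto (fun s : ℝ => (s * (K:ℝ)) • ((A s k)⁻¹ * M k)) atTop
        (nhds (M k)) := by
      intro k
      have h1 : Tendsto (fun s : ℝ => ((s * (K:ℝ)) • (A s k)⁻¹) * M k) atTop
          (nhds (1 * M k)) :=
        ((tendsto_smul_inv (M k)).comp ha).mul tendsto_const_nhds
      simpa [Matrix.smul_mul] using h1
    have hsum := tendsto_finset_sum Finset.univ (fun k (_ : k ∈ Finset.univ) => each k)
    refine hsum.congr fun s => ?_
    simp [hQdef, hT, Finset.smul_sum]
  have hSdet : IsUnit (∑ k, M k).det :=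
    isUnit_iff_ne_zero.mpr (posdef_sum hK M hM).det_pos.ne'
  have hQdet : ∀ᶠ s : ℝ in atTop, (Q s).det ≠ 0 := by
    have hdet : Tendsto (fun s => (Q s).det) atTop (nhds (∑ k, M k).det) :=
      ((continuous_id.matrix_det).tendsto _).comp hQ
    exact hdet.eventually_ne (isUnit_iff_ne_zero.mp hSdet)
  set G : ℝ → Matrix (Fin 2) (Fin 2) ℝ :=
    fun s => (s * K)⁻¹ • P s + P s * ((Q s)⁻¹ * P s) with hGdef
  have hG : Tendsto G atTop (nhds (∑ k, M k)⁻¹) := by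
    have l1 : Tendsto (fun s : ℝ => (s * (K:ℝ))⁻¹ • P s) atTop
        (nhds ((0:ℝ) • (1 : Matrix (Fin 2) (Fin 2) ℝ))) :=
      (tendsto_inv_atTop_zero.comp ha).smul hP
    have l2 : Tendsto (fun s => (Q s)⁻¹) atTop (nhds (∑ k, M k)⁻¹) := tendsto_minv hQ hSdet
    have l3 : Tendsto (fun s => P s * ((Q s)⁻¹ * P s)) atTop
        (nhds (1 * ((∑ k, M k)⁻¹ * 1))) := hP.mul (l2.mul hP)
    have h4 := l1.add l3
    rw [zero_smul, zero_add, Matrix.one_mul, Matrix.mul_one] at h4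
    exact h4
  have hFG : (fun s : ℝ =>
        (Matrix.of fun i j : Fin 2 =>
          ((Matrix.of fun p q : Fin K × Fin 2 =>
              (if p.1 = q.1 then M p.1 p.2 q.2 else 0) +
              s * (if p.1 = q.1 then ((K : ℝ) - 1) * (if p.2 = q.2 then 1 else 0)
                   else -(if p.2 = q.2 then (1 : ℝ) else 0)))⁻¹)
            (kK, i) (kK, j))) =ᶠ[atTop] G := by
    filter_upwards [eventually_gt_atTop 0, hQdet] with s hs hQd
    have hsK : s * (K:ℝ) ≠ 0 := ne_of_gt (mul_pos hs hKR)
    have hAdet : ∀ k, IsUnit (A s k).det := fun k =>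
      isUnit_iff_ne_zero.mpr (posdef_shift (hM k) (le_of_lt (mul_pos hs hKR))).det_pos.ne'
    set Bi : Matrix (Fin K × Fin 2) (Fin K × Fin 2) ℝ := DD (fun k => (A s k)⁻¹) with hBi
    set Cm : Matrix (Fin 2) (Fin 2) ℝ := (s * K)⁻¹ • T s with hCm
    have hTdet : (T s).det ≠ 0 := by
      intro h0
      apply hQd
      simp only [hQdef, Matrix.det_smul, h0, mul_zero]
    have hCdet : IsUnit Cm.det := by
      rw [hCm, Matrix.det_smul]
      exact isUnit_iff_ne_zero.mpr (mul_ne_zero (pow_ne_zero _ (inv_ne_zero hsK)) hTdet)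
    have hB : DD (A s) * Bi = 1 := by
      rw [hBi, DD_mul, show (fun k => A s k * (A s k)⁻¹) = fun _ : Fin K => (1 : Matrix (Fin 2) (Fin 2) ℝ)
        from funext fun k => Matrix.mul_nonsing_inv _ (hAdet k), DD_one]
    have hAk : ∀ k, (A s k)⁻¹ = (s*K)⁻¹ • ((1 : Matrix (Fin 2) (Fin 2) ℝ) - (A s k)⁻¹ * M k) := by
      intro k
      have h := Matrix.nonsing_inv_mul (A s k) (hAdet k)
      have h2 : (A s k)⁻¹ * M k + (s*K) • (A s k)⁻¹ = 1 := by
        rw [← h]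
        nth_rewrite 3 [show A s k = M k + (s*K) • 1 from rfl]
        rw [Matrix.mul_add, Matrix.mul_smul, Matrix.mul_one]
      have h3 : (s*K) • (A s k)⁻¹ = (1 : Matrix (Fin 2) (Fin 2) ℝ) - (A s k)⁻¹ * M k := by
        rw [← h2]; abel
      calc (A s k)⁻¹ = (s*K)⁻¹ • ((s*K) • (A s k)⁻¹) := by
            rw [smul_smul, inv_mul_cancel₀ hsK, one_smul]
        _ = (s*K)⁻¹ • ((1 : Matrix (Fin 2) (Fin 2) ℝ) - (A s k)⁻¹ * M k) := by rw [h3]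
    have hsumA : ∑ k, (A s k)⁻¹ = s⁻¹ • (1 : Matrix (Fin 2) (Fin 2) ℝ) - Cm := by
      rw [hCm]
      calc ∑ k, (A s k)⁻¹
          = ∑ k, (s*K)⁻¹ • ((1 : Matrix (Fin 2) (Fin 2) ℝ) - (A s k)⁻¹ * M k) :=
            Finset.sum_congr rfl fun k _ => hAk k
        _ = (s*K)⁻¹ • ((K : ℕ) • (1 : Matrix (Fin 2) (Fin 2) ℝ) - ∑ k, (A s k)⁻¹ * M k) := by
            rw [← Finset.smul_sum, Finset.sum_sub_distrib, Finset.sum_const, Finset.card_univ,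
              Fintype.card_fin]
        _ = s⁻¹ • (1 : Matrix (Fin 2) (Fin 2) ℝ) - (s*K)⁻¹ • T s := by
            rw [smul_sub, hT]
            congr 1
            rw [← Nat.cast_smul_eq_nsmul ℝ, smul_smul]
            congr 1
            field_simp
    have hW : (WW K)ᵀ * Bi * WW K = s⁻¹ • (1 : Matrix (Fin 2) (Fin 2) ℝ) - Cm := by
      rw [hBi, sandwich, hsumA]
    have hC1 : Cm * Cm⁻¹ = 1 := Matrix.mul_nonsing_inv _ hCdet
    have hprod := woodbury s hs.ne' (DD (A s)) Bi (WW K) Cm Cm⁻¹ hB hW hC1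
    have hJeq : (Matrix.of fun p q : Fin K × Fin 2 =>
              (if p.1 = q.1 then M p.1 p.2 q.2 else 0) +
              s * (if p.1 = q.1 then ((K : ℝ) - 1) * (if p.2 = q.2 then 1 else 0)
                   else -(if p.2 = q.2 then (1 : ℝ) else 0)))
        = DD (A s) - s • (WW K * (WW K)ᵀ) := by
      ext ⟨k, i⟩ ⟨l, j⟩
      rw [Matrix.sub_apply, Matrix.smul_apply, WW_mul_WWT, DD_apply]
      by_cases hkl : k = l <;> by_cases hij : i = j <;>
        simp [hkl, hij, hA, Matrix.add_apply, Matrix.smul_apply, Matrix.one_apply,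
          smul_eq_mul] <;> ring
    have hJinv : (Matrix.of fun p q : Fin K × Fin 2 =>
              (if p.1 = q.1 then M p.1 p.2 q.2 else 0) +
              s * (if p.1 = q.1 then ((K : ℝ) - 1) * (if p.2 = q.2 then 1 else 0)
                   else -(if p.2 = q.2 then (1 : ℝ) else 0)))⁻¹
        = Bi + (Bi * WW K) * (Cm⁻¹ * ((WW K)ᵀ * Bi)) := by
      apply Matrix.inv_eq_right_inv
      rw [hJeq]; exact hprod
    have hext : (Matrix.of fun i j : Fin 2 =>
          (Bi + (Bi * WW K) * (Cm⁻¹ * ((WW K)ᵀ * Bi))) (kK, i) (kK, j))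
        = (A s kK)⁻¹ + (A s kK)⁻¹ * (Cm⁻¹ * (A s kK)⁻¹) := by
      ext i j
      rw [Matrix.of_apply, Matrix.add_apply, Matrix.add_apply]
      congr 1
      · rw [hBi, DD_apply]; simp
      · rw [Matrix.mul_apply, Matrix.mul_apply]
        refine Finset.sum_congr rfl fun p _ => ?_
        rw [hBi, DD_mul_WW]
        congr 1
        rw [Matrix.mul_apply, Matrix.mul_apply]
        refine Finset.sum_congr rfl fun q _ => ?_
        congr 1
        rw [WWT_mul_DD]
    have hCinv : Cm⁻¹ = (s*K) • (T s)⁻¹ := by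
      rw [hCm, msmul_inv _ (inv_ne_zero hsK), inv_inv]
    have hQinv : (Q s)⁻¹ = (s*K)⁻¹ • (T s)⁻¹ := by
      simp only [hQdef]
      rw [msmul_inv _ hsK]
    have hfin2 : (A s kK)⁻¹ + (A s kK)⁻¹ * (Cm⁻¹ * (A s kK)⁻¹) = G s := by
      simp only [hGdef, hPdef, hQinv, hCinv]
      simp only [smul_smul, Matrix.smul_mul, Matrix.mul_smul]
      congr 1
      · rw [inv_mul_cancel₀ hsK, one_smul]
      · congr 1
        field_simp
    simp only [hJinv]
    exact hext.trans hfin2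
  have hF : Tendsto (fun s : ℝ =>
        (Matrix.of fun i j : Fin 2 =>
          ((Matrix.of fun p q : Fin K × Fin 2 =>
              (if p.1 = q.1 then M p.1 p.2 q.2 else 0) +
              s * (if p.1 = q.1 then ((K : ℝ) - 1) * (if p.2 = q.2 then 1 else 0)
                   else -(if p.2 = q.2 then (1 : ℝ) else 0)))⁻¹)
            (kK, i) (kK, j))) atTop (nhds (∑ k, M k)⁻¹) := hG.congr' hFG.symm
  have hfin := tendsto_minv hF (Matrix.isUnit_nonsing_inv_det _ hSdet)
  rwa [Matrix.nonsing_inv_nonsing_inv _ hSdet] at hfin
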